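/- arXiv:1812.09927 — 5 statements merged into one kernel-verified Lean document; each statement's English description precedes it below -/
import Mathlib

section
/- Suppose P is φ-mixing (i.e. φ(n) → 0 as n → ∞) and sup_{a∈𝒜} P([a]) < 1. Then there exists a constant υ > 0 such that for every n ≥ 1 and every n-cylinder A = [a_0, a_1, …, a_{n−1}] one has P(A) ≤ e^{−υn}. -/
open MeasureTheory Filter Set

/-- Total variation distance `d_TV(μ,ν) = sup_G |μ(G) − ν(G)|`. -/
noncomputable def dTV {α : Type*} [MeasurableSpace α] (μ ν : Measure α) : ℝ :=
  sSup {x | ∃ s : Set α, MeasurableSet s ∧ x = |(μ s).toReal - (ν s).toReal|}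

/-- Geometric distribution on ℕ with `Geo(ρ){k} = ρ(1−ρ)^k`. -/
noncomputable def geoMeasure (ρ : ℝ) : Measure ℕ :=
  Measure.sum fun k => ENNReal.ofReal (ρ * (1 - ρ) ^ k) • Measure.dirac k

/-- First hitting time `τ_V(ω) = min{k ≥ 1 : T^k ω ∈ V}` (junk value 0 if no such k). -/
noncomputable def hitTime {Ω : Type*} (T : Ω → Ω) (V : Set Ω) (ω : Ω) : ℕ :=
  sInf {k | 1 ≤ k ∧ T^[k] ω ∈ V}

/-- `Σ_{U,V} = Σ_{k=0}^{τ_V−1} 1_U ∘ T^k`. -/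
noncomputable def numVisits {Ω : Type*} (T : Ω → Ω) (U V : Set Ω) (ω : Ω) : ℕ :=
  ∑ k ∈ Finset.range (hitTime T V ω), U.indicator (fun _ => 1) (T^[k] ω)

/-- The φ-dependence coefficient between two sub-σ-algebras. -/
noncomputable def phiCoef {Ω : Type*} [MeasurableSpace Ω] (P : Measure Ω)
    (G H : MeasurableSpace Ω) : ℝ :=
  sSup {x | ∃ Γ Δ : Set Ω, MeasurableSet[G] Γ ∧ MeasurableSet[H] Δ ∧ P Γ ≠ 0 ∧
    x = |(P (Γ ∩ Δ)).toReal / (P Γ).toReal - (P Δ).toReal|}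

/-- σ-algebra on the sequence space generated by the coordinates in `s`. -/
noncomputable def coordAlg (𝓐 : Type*) [m𝓐 : MeasurableSpace 𝓐] (s : Set ℕ) :
    MeasurableSpace (ℕ → 𝓐) :=
  ⨆ i ∈ s, m𝓐.comap fun ω => ω i

/-- `φ(n) = sup_{m≥0} φ(ℱ_{0,m}, ℱ_{m+n,∞})`. -/
noncomputable def phiMix (𝓐 : Type*) [MeasurableSpace 𝓐] (P : Measure (ℕ → 𝓐)) (n : ℕ) : ℝ :=
  ⨆ m : ℕ, phiCoef P (coordAlg 𝓐 (Set.Iic m)) (coordAlg 𝓐 (Set.Ici (m + n)))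

/-- `φ` extended to ℤ by `φ(k) = 1` for `k ≤ 0`. -/
noncomputable def phiMixZ (𝓐 : Type*) [MeasurableSpace 𝓐] (P : Measure (ℕ → 𝓐)) (j : ℤ) : ℝ :=
  if j ≤ 0 then 1 else phiMix 𝓐 P j.toNat

/-- The left shift on `𝓐^ℕ`. -/
def shift (𝓐 : Type*) : (ℕ → 𝓐) → (ℕ → 𝓐) := fun ω n => ω (n + 1)

/-- `π(U) = min{1 ≤ k ≤ n : U ∩ T^{−k}U ≠ ∅}`. -/
noncomputable def piRet {Ω : Type*} (T : Ω → Ω) (n : ℕ) (U : Set Ω) : ℕ :=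
  sInf {k | 1 ≤ k ∧ k ≤ n ∧ (U ∩ T^[k] ⁻¹' U).Nonempty}

/-- `π(U,V) = min{0 ≤ k ≤ min(n,m) : U ∩ T^{−k}V ≠ ∅ or V ∩ T^{−k}U ≠ ∅}`. -/
noncomputable def piJoint {Ω : Type*} (T : Ω → Ω) (n m : ℕ) (U V : Set Ω) : ℕ :=
  sInf {k | k ≤ min n m ∧ ((U ∩ T^[k] ⁻¹' V).Nonempty ∨ (V ∩ T^[k] ⁻¹' U).Nonempty)}

/-- `κ_{U,V} = min(π(U,V), π(U), π(V))`. -/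
noncomputable def kappa {Ω : Type*} (T : Ω → Ω) (n m : ℕ) (U V : Set Ω) : ℕ :=
  min (piJoint T n m U V) (min (piRet T n U) (piRet T m V))


/-- The cylinder `A^ξ_n = [ξ_0 … ξ_{n−1}]`. -/
def cyl {𝓐 : Type*} (ξ : ℕ → 𝓐) (n : ℕ) : Set (ℕ → 𝓐) := {ω | ∀ i < n, ω i = ξ i}

section AuxLemmas

open MeasureTheory Filter Set

lemma my_measurableSet_coord {𝓐 : Type*} [MeasurableSpace 𝓐] [DiscreteMeasurableSpace 𝓐]
    {s : Set ℕ} {i : ℕ} (hi : i ∈ s) (b : 𝓐) :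
    MeasurableSet[coordAlg 𝓐 s] {ω : ℕ → 𝓐 | ω i = b} := by
  have h : (‹MeasurableSpace 𝓐›.comap fun ω : ℕ → 𝓐 => ω i) ≤ coordAlg 𝓐 s :=
    le_iSup₂ (f := fun i (_ : i ∈ s) => ‹MeasurableSpace 𝓐›.comap fun ω : ℕ → 𝓐 => ω i) i hi
  exact h _ ⟨{b}, MeasurableSet.singleton b, rfl⟩

lemma my_phiCoef_mem_le {Ω : Type*} [mΩ : MeasurableSpace Ω] (P : Measure Ω) [IsProbabilityMeasure P]
    (G H : MeasurableSpace Ω) {Γ Δ : Set Ω} (hΓ : MeasurableSet[G] Γ)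
    (hΔ : MeasurableSet[H] Δ) (h0 : P Γ ≠ 0) :
    |(P (Γ ∩ Δ)).toReal / (P Γ).toReal - (P Δ).toReal| ≤ @phiCoef Ω mΩ P G H := by
  apply le_csSup
  · refine ⟨1, ?_⟩
    rintro x ⟨Γ', Δ', hΓ', hΔ', h0', rfl⟩
    have hb : 0 < (P Γ').toReal := ENNReal.toReal_pos h0' (measure_ne_top P _)
    have h1 : (P (Γ' ∩ Δ')).toReal ≤ (P Γ').toReal :=
      ENNReal.toReal_mono (measure_ne_top P _) (measure_mono inter_subset_left)
    have h2 : (P (Γ' ∩ Δ')).toReal / (P Γ').toReal ≤ 1 := div_le_one_of_le₀ h1 hb.le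
    have h3 : 0 ≤ (P (Γ' ∩ Δ')).toReal / (P Γ').toReal :=
      div_nonneg ENNReal.toReal_nonneg hb.le
    have h4 : (P Δ').toReal ≤ 1 := by
      have := ENNReal.toReal_mono (measure_ne_top P _) (measure_mono (subset_univ Δ'))
      simpa using this
    have h5 : 0 ≤ (P Δ').toReal := ENNReal.toReal_nonneg
    rw [abs_sub_le_iff]
    constructor <;> linarith
  · exact ⟨Γ, Δ, hΓ, hΔ, h0, rfl⟩

lemma my_phiCoef_le_one {Ω : Type*} [mΩ : MeasurableSpace Ω] (P : Measure Ω) [IsProbabilityMeasure P]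
    (G H : MeasurableSpace Ω) : @phiCoef Ω mΩ P G H ≤ 1 := by
  apply csSup_le
  · refine ⟨0, Set.univ, Set.univ, MeasurableSet.univ, MeasurableSet.univ, ?_, ?_⟩
    · simp
    · simp
  · rintro x ⟨Γ', Δ', hΓ', hΔ', h0', rfl⟩
    have hb : 0 < (P Γ').toReal := ENNReal.toReal_pos h0' (measure_ne_top P _)
    have h1 : (P (Γ' ∩ Δ')).toReal ≤ (P Γ').toReal :=
      ENNReal.toReal_mono (measure_ne_top P _) (measure_mono inter_subset_left)
    have h2 : (P (Γ' ∩ Δ')).toReal / (P Γ').toReal ≤ 1 := div_le_one_of_le₀ h1 hb.le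
    have h3 : 0 ≤ (P (Γ' ∩ Δ')).toReal / (P Γ').toReal :=
      div_nonneg ENNReal.toReal_nonneg hb.le
    have h4 : (P Δ').toReal ≤ 1 := by
      have := ENNReal.toReal_mono (measure_ne_top P _) (measure_mono (subset_univ Δ'))
      simpa using this
    have h5 : 0 ≤ (P Δ').toReal := ENNReal.toReal_nonneg
    rw [abs_sub_le_iff]
    constructor <;> linarith

lemma my_phiCoef_nonneg {Ω : Type*} [mΩ : MeasurableSpace Ω] (P : Measure Ω)
    [IsProbabilityMeasure P] (G H : MeasurableSpace Ω) : 0 ≤ @phiCoef Ω mΩ P G H := by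
  apply le_csSup
  · refine ⟨1, ?_⟩
    rintro x ⟨Γ', Δ', hΓ', hΔ', h0', rfl⟩
    have hb : 0 < (P Γ').toReal := ENNReal.toReal_pos h0' (measure_ne_top P _)
    have h1 : (P (Γ' ∩ Δ')).toReal ≤ (P Γ').toReal :=
      ENNReal.toReal_mono (measure_ne_top P _) (measure_mono inter_subset_left)
    have h2 : (P (Γ' ∩ Δ')).toReal / (P Γ').toReal ≤ 1 := div_le_one_of_le₀ h1 hb.le
    have h3 : 0 ≤ (P (Γ' ∩ Δ')).toReal / (P Γ').toReal :=
      div_nonneg ENNReal.toReal_nonneg hb.le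
    have h4 : (P Δ').toReal ≤ 1 := by
      have := ENNReal.toReal_mono (measure_ne_top P _) (measure_mono (subset_univ Δ'))
      simpa using this
    have h5 : 0 ≤ (P Δ').toReal := ENNReal.toReal_nonneg
    rw [abs_sub_le_iff]
    constructor <;> linarith
  · exact ⟨Set.univ, Set.univ, MeasurableSet.univ, MeasurableSet.univ, by simp, by simp⟩

lemma my_mix_ineq {𝓐 : Type*} [MeasurableSpace 𝓐] (P : Measure (ℕ → 𝓐)) [IsProbabilityMeasure P]
    (m g : ℕ) {Γ Δ : Set (ℕ → 𝓐)}
    (hΓ : MeasurableSet[coordAlg 𝓐 (Set.Iic m)] Γ)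
    (hΔ : MeasurableSet[coordAlg 𝓐 (Set.Ici (m + g))] Δ) :
    (P (Γ ∩ Δ)).toReal ≤ (P Γ).toReal * ((P Δ).toReal + phiMix 𝓐 P g) := by
  rcases eq_or_ne (P Γ) 0 with h0 | h0
  · have : P (Γ ∩ Δ) = 0 := le_antisymm (h0 ▸ measure_mono inter_subset_left) zero_le
    simp [this, h0]
  · have habs := my_phiCoef_mem_le P _ _ hΓ hΔ h0
    have hφ : phiCoef P (coordAlg 𝓐 (Set.Iic m)) (coordAlg 𝓐 (Set.Ici (m + g)))
        ≤ phiMix 𝓐 P g := by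
      apply le_ciSup (f := fun m => phiCoef P (coordAlg 𝓐 (Set.Iic m))
        (coordAlg 𝓐 (Set.Ici (m + g)))) (c := m)
      exact ⟨1, by rintro x ⟨m', rfl⟩; exact my_phiCoef_le_one P _ _⟩
    have hb : 0 < (P Γ).toReal := ENNReal.toReal_pos h0 (measure_ne_top P _)
    have h1 : (P (Γ ∩ Δ)).toReal / (P Γ).toReal - (P Δ).toReal ≤ phiMix 𝓐 P g :=
      le_trans (le_trans (le_abs_self _) habs) hφ
    rw [div_sub' hb.ne', div_le_iff₀ hb] at h1
    nlinarith
end AuxLemmas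

/-- Lemma 3.1: if `P` is `φ`-mixing and `sup_a P([a]) < 1` then the measures of
`n`-cylinders decay exponentially fast in `n`. -/
theorem cylinder_measure_exponential_decay
    {𝓐 : Type*} [MeasurableSpace 𝓐] [DiscreteMeasurableSpace 𝓐] [Countable 𝓐] [Nontrivial 𝓐]
    (P : Measure (ℕ → 𝓐)) [IsProbabilityMeasure P]
    (hinv : MeasurePreserving (shift 𝓐) P P)
    (hmix : Tendsto (fun n => phiMix 𝓐 P n) atTop (nhds 0))
    (hsup : (⨆ a : 𝓐, (P {ω | ω 0 = a}).toReal) < 1) :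

    ∃ υ : ℝ, 0 < υ ∧ ∀ n : ℕ, 1 ≤ n → ∀ a : ℕ → 𝓐,
      (P (cyl a n)).toReal ≤ Real.exp (-υ * n) := by
  classical
  set θ := ⨆ a : 𝓐, (P {ω | ω 0 = a}).toReal with hθdef
  have hθ0 : 0 ≤ θ := Real.iSup_nonneg fun a => ENNReal.toReal_nonneg
  have hθa : ∀ b : 𝓐, (P {ω | ω 0 = b}).toReal ≤ θ := by
    intro b
    apply le_ciSup (f := fun b : 𝓐 => (P {ω | ω 0 = b}).toReal)
    refine ⟨1, ?_⟩
    rintro x ⟨b', rfl⟩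
    have := ENNReal.toReal_mono (measure_ne_top P _)
      (measure_mono (subset_univ {ω : ℕ → 𝓐 | ω 0 = b'}))
    simpa using this
  set c := (1 + θ) / 2 with hcdef
  have hθ1 : θ < 1 := hsup
  have hc0 : 0 < c := by rw [hcdef]; linarith
  have hc1 : c < 1 := by rw [hcdef]; linarith
  obtain ⟨g, hg⟩ : ∃ g, phiMix 𝓐 P g < (1 - θ) / 2 :=
    (hmix.eventually (gt_mem_nhds (by linarith : (0:ℝ) < (1 - θ) / 2))).exists
  set s := g + 1 with hsdef
  have hs0 : 0 < s := Nat.succ_pos g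
  have hsR : (0:ℝ) < (s:ℝ) := by exact_mod_cast hs0
  have hlog : Real.log c < 0 := Real.log_neg hc0 hc1
  have hcoord : ∀ (i : ℕ) (b : 𝓐), P {ω | ω i = b} = P {ω | ω 0 = b} := by
    intro i b
    induction i with
    | zero => rfl
    | succ i ih =>
      have hm : MeasurableSet {ω : ℕ → 𝓐 | ω i = b} := by
        have hrw : {ω : ℕ → 𝓐 | ω i = b} = (fun ω : ℕ → 𝓐 => ω i) ⁻¹' {b} := rfl
        rw [hrw]
        exact measurable_pi_apply i (MeasurableSet.singleton b)
      have hpre : {ω : ℕ → 𝓐 | ω (i + 1) = b} = shift 𝓐 ⁻¹' {ω | ω i = b} := rfl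
      rw [hpre, hinv.measure_preimage hm.nullMeasurableSet, ih]
  refine ⟨-Real.log c / s, div_pos (neg_pos.mpr hlog) hsR, ?_⟩
  intro n hn a
  set Δ : ℕ → Set (ℕ → 𝓐) := fun j => {ω | ω (j * s) = a (j * s)} with hΔdef
  set E : ℕ → Set (ℕ → 𝓐) := fun N => ⋂ j ∈ Finset.range N, Δ j with hEdef
  have hΔθ : ∀ j, (P (Δ j)).toReal ≤ θ := by
    intro j
    simp only [hΔdef]
    rw [hcoord]
    exact hθa _
  have hEmeas : ∀ N m, (∀ j < N, j * s ≤ m) →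
      MeasurableSet[coordAlg 𝓐 (Set.Iic m)] (E N) := by
    intro N m hm
    simp only [hEdef, hΔdef]
    refine MeasurableSet.iInter (m := coordAlg 𝓐 (Set.Iic m)) fun j => ?_
    refine MeasurableSet.iInter (m := coordAlg 𝓐 (Set.Iic m)) fun hj => ?_
    exact my_measurableSet_coord (𝓐 := 𝓐) (i := j * s)
      (show j * s ∈ Set.Iic m from hm j (Finset.mem_range.mp hj)) (a (j * s))
  have hkey : ∀ N, (P (E N)).toReal ≤ c ^ N := by
    intro N
    induction N with
    | zero => simp [hEdef]
    | succ M ih =>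
      have hsplit : E (M + 1) = E M ∩ Δ M := by
        simp only [hEdef]
        rw [Finset.range_add_one, Finset.set_biInter_insert]
        exact Set.inter_comm _ _
      rcases M with _ | M'
      · have hE1 : E 1 = Δ 0 := by simp [hEdef]
        rw [hE1]
        calc (P (Δ 0)).toReal ≤ θ := hΔθ 0
          _ ≤ c ^ 1 := by rw [pow_one, hcdef]; linarith
      · have hEm : MeasurableSet[coordAlg 𝓐 (Set.Iic (M' * s))] (E (M' + 1)) := by
          apply hEmeas
          intro j hj
          exact Nat.mul_le_mul_right s (by omega)
        have hΔm : MeasurableSet[coordAlg 𝓐 (Set.Ici (M' * s + g))] (Δ (M' + 1)) := by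
          simp only [hΔdef]
          exact my_measurableSet_coord (𝓐 := 𝓐) (i := (M' + 1) * s)
            (show (M' + 1) * s ∈ Set.Ici (M' * s + g) by
              simp only [Set.mem_Ici, add_mul, one_mul]; omega) (a ((M' + 1) * s))
        have h := my_mix_ineq P (M' * s) g hEm hΔm
        rw [hsplit]
        calc (P (E (M' + 1) ∩ Δ (M' + 1))).toReal
            ≤ (P (E (M' + 1))).toReal * ((P (Δ (M' + 1))).toReal + phiMix 𝓐 P g) := h
          _ ≤ c ^ (M' + 1) * c := by
              apply mul_le_mul ih ?_ ?_ (pow_nonneg hc0.le _)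
              · have := hΔθ (M' + 1)
                rw [hcdef]
                linarith
              · have h5 : (0:ℝ) ≤ (P (Δ (M' + 1))).toReal := ENNReal.toReal_nonneg
                have h7 : 0 ≤ phiMix 𝓐 P g :=
                  Real.iSup_nonneg fun m => my_phiCoef_nonneg P _ _
                linarith
          _ = c ^ (M' + 1 + 1) := (pow_succ c (M' + 1)).symm
  set N := (n - 1) / s + 1 with hNdef
  have hsub : cyl a n ⊆ E N := by
    intro ω hω
    simp only [hEdef, Set.mem_iInter]
    intro j hj
    apply hω
    have hj' : j ≤ (n - 1) / s := by
      have := Finset.mem_range.mp hj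
      omega
    have h1 : j * s ≤ ((n - 1) / s) * s := Nat.mul_le_mul_right s hj'
    have h2 : ((n - 1) / s) * s ≤ n - 1 := Nat.div_mul_le_self _ _
    omega
  have h1 : (P (cyl a n)).toReal ≤ (P (E N)).toReal :=
    ENNReal.toReal_mono (measure_ne_top P _) (measure_mono hsub)
  have hns : n ≤ N * s := by
    have e1 := Nat.div_add_mod (n - 1) s
    have e2 := Nat.mod_lt (n - 1) hs0
    have e3 : N * s = s * ((n - 1) / s) + s := by
      rw [hNdef, add_mul, one_mul, Nat.mul_comm]
    omega
  calc (P (cyl a n)).toReal ≤ c ^ N := h1.trans (hkey N)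
    _ = Real.exp ((N : ℝ) * Real.log c) := by
        conv_lhs => rw [← Real.exp_log hc0]
        rw [← Real.exp_nat_mul]
    _ ≤ Real.exp (-(-Real.log c / ↑s) * ↑n) := by
        apply Real.exp_le_exp.mpr
        have hNn : (n : ℝ) / (s : ℝ) ≤ (N : ℝ) := by
          rw [div_le_iff₀ hsR]
          exact_mod_cast hns
        have hmul : (N : ℝ) * Real.log c ≤ ((n : ℝ) / (s : ℝ)) * Real.log c :=
          mul_le_mul_of_nonpos_right hNn hlog.le
        calc (N : ℝ) * Real.log c ≤ ((n : ℝ) / (s : ℝ)) * Real.log c := hmul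
          _ = -(-Real.log c / ↑s) * ↑n := by ring
end

section
/- Let (Ω, ℱ, P) be a probability space and ℱ₁, ℱ₂, ℱ₃ sub-σ-algebras of ℱ. Suppose δ ≥ 0 satisfies φ(ℱ₁, σ(ℱ₂, ℱ₃)) ≤ δ and φ(ℱ₂, ℱ₃) ≤ δ. Then α(ℱ₂, σ(ℱ₁, ℱ₃)) ≤ 3δ. -/
open MeasureTheory

/-- The α-dependence coefficient between two sub-σ-algebras. -/
noncomputable def alphaCoef {Ω : Type*} [MeasurableSpace Ω] (P : Measure Ω)
    (G H : MeasurableSpace Ω) : ℝ :=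
  sSup {x | ∃ Γ Δ : Set Ω, MeasurableSet[G] Γ ∧ MeasurableSet[H] Δ ∧
    x = |(P (Γ ∩ Δ)).toReal - (P Γ).toReal * (P Δ).toReal|}

open MeasurableSpace Set
open scoped symmDiff ENNReal

lemma phi_pointwise {Ω : Type*} [mΩ : MeasurableSpace Ω] (P : Measure Ω) [IsProbabilityMeasure P]
    (G H : MeasurableSpace Ω) {δ : ℝ} (hφ : @phiCoef Ω mΩ P G H ≤ δ)
    {Γ Δ : Set Ω} (hΓ : MeasurableSet[G] Γ) (hΔ : MeasurableSet[H] Δ) :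
    |(P (Γ ∩ Δ)).toReal - (P Γ).toReal * (P Δ).toReal| ≤ δ * (P Γ).toReal := by
  by_cases h0 : P Γ = 0
  · have h1 : P (Γ ∩ Δ) = 0 := measure_mono_null Set.inter_subset_left h0
    simp [h0, h1]
  · have hbdd : BddAbove {x | ∃ Γ Δ : Set Ω, MeasurableSet[G] Γ ∧ MeasurableSet[H] Δ ∧ P Γ ≠ 0 ∧
        x = |(P (Γ ∩ Δ)).toReal / (P Γ).toReal - (P Δ).toReal|} := by
      refine ⟨1, ?_⟩
      rintro x ⟨Γ, Δ, hΓ, hΔ, h0, rfl⟩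
      have hb : 0 < (P Γ).toReal := ENNReal.toReal_pos h0 (measure_ne_top _ _)
      have ha : (P (Γ ∩ Δ)).toReal ≤ (P Γ).toReal :=
        ENNReal.toReal_mono (measure_ne_top _ _) (measure_mono Set.inter_subset_left)
      have hdiv : (P (Γ ∩ Δ)).toReal / (P Γ).toReal ≤ 1 := div_le_one_of_le₀ ha hb.le
      have hdiv0 : 0 ≤ (P (Γ ∩ Δ)).toReal / (P Γ).toReal := by positivity
      have hv : (P Δ).toReal ≤ 1 := by
        simpa using ENNReal.toReal_mono ENNReal.one_ne_top (prob_le_one (μ := P) (s := Δ))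
      have hv0 : 0 ≤ (P Δ).toReal := ENNReal.toReal_nonneg
      rw [abs_sub_le_iff]
      constructor <;> linarith
    have hmem : |(P (Γ ∩ Δ)).toReal / (P Γ).toReal - (P Δ).toReal| ≤ @phiCoef Ω mΩ P G H :=
      le_csSup hbdd ⟨Γ, Δ, hΓ, hΔ, h0, rfl⟩
    have hb : 0 < (P Γ).toReal := ENNReal.toReal_pos h0 (measure_ne_top _ _)
    have key : (P (Γ ∩ Δ)).toReal - (P Γ).toReal * (P Δ).toReal
        = (P Γ).toReal * ((P (Γ ∩ Δ)).toReal / (P Γ).toReal - (P Δ).toReal) := by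
      field_simp
    rw [key, abs_mul, abs_of_pos hb, mul_comm]
    exact mul_le_mul_of_nonneg_right (hmem.trans hφ) hb.le

def rectAlg {Ω : Type*} (F1 F3 : MeasurableSpace Ω) : Set (Set Ω) :=
  {Δ | ∃ (ι : Type) (_ : Fintype ι) (A C : ι → Set Ω),
    (∀ i, MeasurableSet[F1] (A i)) ∧ (∀ i, MeasurableSet[F3] (C i)) ∧
    Pairwise (Function.onFun Disjoint A) ∧ (⋃ i, A i) = Set.univ ∧ Δ = ⋃ i, A i ∩ C i}

lemma mem_rectAlg_left {Ω : Type*} {F1 F3 : MeasurableSpace Ω} {S : Set Ω}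
    (hS : MeasurableSet[F1] S) : S ∈ rectAlg F1 F3 := by
  refine ⟨Bool, inferInstance, fun b => if b then S else Sᶜ, fun b => if b then univ else ∅,
    ?_, ?_, ?_, ?_, ?_⟩
  · intro b; cases b <;> simp [hS, hS.compl]
  · intro b; cases b <;> simp
  · intro a b hab
    cases a <;> cases b <;> simp_all [Function.onFun, disjoint_compl_left, disjoint_compl_right]
  · ext x; by_cases hx : x ∈ S <;> simp [Set.mem_iUnion, hx]
  · ext x; by_cases hx : x ∈ S <;> simp [Set.mem_iUnion, hx]

lemma mem_rectAlg_right {Ω : Type*} {F1 F3 : MeasurableSpace Ω} {S : Set Ω}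
    (hS : MeasurableSet[F3] S) : S ∈ rectAlg F1 F3 := by
  exact ⟨PUnit, inferInstance, fun _ => univ, fun _ => S,
    fun _ => MeasurableSet.univ, fun _ => hS, Subsingleton.pairwise,
    by simp [Set.iUnion_const], by simp [Set.iUnion_const]⟩

lemma isSetAlgebra_rectAlg {Ω : Type*} (F1 F3 : MeasurableSpace Ω) :
    IsSetAlgebra (rectAlg F1 F3) where
  empty_mem := ⟨PUnit, inferInstance, fun _ => univ, fun _ => ∅,
    fun _ => MeasurableSet.univ, fun _ => MeasurableSet.empty, Subsingleton.pairwise,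
    by simp [Set.iUnion_const], by simp [Set.iUnion_const]⟩
  compl_mem := by
    rintro s ⟨ι, hι, A, C, hA, hC, hd, hcov, rfl⟩
    refine ⟨ι, hι, A, fun i => (C i)ᶜ, hA, fun i => (hC i).compl, hd, hcov, ?_⟩
    ext x
    have hxA : ∃ i, x ∈ A i := by
      have := hcov.symm.subset (Set.mem_univ x); simpa [Set.mem_iUnion] using this
    obtain ⟨i, hi⟩ := hxA
    simp only [Set.mem_compl_iff, Set.mem_iUnion, Set.mem_inter_iff, not_exists, not_and]
    constructor
    · intro h; exact ⟨i, hi, h i hi⟩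
    · rintro ⟨j, hxj, hxc⟩ k hxk
      rcases eq_or_ne k j with rfl | hne
      · exact hxc
      · exact absurd hxj (Set.disjoint_left.mp (hd hne) hxk)
  union_mem := by
    rintro s t ⟨ι, hι, A, C, hA, hC, hd, hcov, rfl⟩ ⟨κ, hκ, B, D, hB, hD, hd', hcov', rfl⟩
    refine ⟨ι × κ, @instFintypeProd ι κ hι hκ, fun p => A p.1 ∩ B p.2,
      fun p => C p.1 ∪ D p.2, fun p => (hA p.1).inter (hB p.2),
      fun p => (hC p.1).union (hD p.2), ?_, ?_, ?_⟩
    · rintro ⟨i, j⟩ ⟨k, l⟩ hne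
      rcases eq_or_ne i k with rfl | hik
      · have hjl : j ≠ l := by rintro rfl; exact hne rfl
        exact ((hd' hjl).mono Set.inter_subset_right Set.inter_subset_right)
      · exact ((hd hik).mono Set.inter_subset_left Set.inter_subset_left)
    · ext x
      have h1 : ∃ i, x ∈ A i := by
        have := hcov.symm.subset (Set.mem_univ x); simpa [Set.mem_iUnion] using this
      have h2 : ∃ j, x ∈ B j := by
        have := hcov'.symm.subset (Set.mem_univ x); simpa [Set.mem_iUnion] using this
      obtain ⟨i, hi⟩ := h1; obtain ⟨j, hj⟩ := h2
      simp only [Set.mem_iUnion, Set.mem_inter_iff, Set.mem_univ, iff_true, Prod.exists]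
      exact ⟨i, j, hi, hj⟩
    · ext x
      constructor
      · intro hx
        rcases hx with hx | hx
        · obtain ⟨i, hxa, hxc⟩ := Set.mem_iUnion.1 hx
          obtain ⟨j, hj⟩ : ∃ j, x ∈ B j := by
            have := hcov'.symm.subset (Set.mem_univ x); simpa [Set.mem_iUnion] using this
          exact Set.mem_iUnion.2 ⟨(i, j), ⟨hxa, hj⟩, Or.inl hxc⟩
        · obtain ⟨j, hxb, hxd⟩ := Set.mem_iUnion.1 hx
          obtain ⟨i, hi⟩ : ∃ i, x ∈ A i := by
            have := hcov.symm.subset (Set.mem_univ x); simpa [Set.mem_iUnion] using this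
          exact Set.mem_iUnion.2 ⟨(i, j), ⟨hi, hxb⟩, Or.inr hxd⟩
      · intro hx
        obtain ⟨p, ⟨hxa, hxb⟩, hcd⟩ := Set.mem_iUnion.1 hx
        rcases hcd with h | h
        · exact Or.inl (Set.mem_iUnion.2 ⟨p.1, hxa, h⟩)
        · exact Or.inr (Set.mem_iUnion.2 ⟨p.2, hxb, h⟩)

lemma generateFrom_rectAlg {Ω : Type*} (F1 F3 : MeasurableSpace Ω) :
    MeasurableSpace.generateFrom (rectAlg F1 F3) = F1 ⊔ F3 := by
  apply le_antisymm
  · apply MeasurableSpace.generateFrom_le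
    rintro s ⟨ι, hι, A, C, hA, hC, -, -, rfl⟩
    haveI := hι
    exact MeasurableSet.iUnion fun i =>
      ((le_sup_left : F1 ≤ F1 ⊔ F3) _ (hA i)).inter ((le_sup_right : F3 ≤ F1 ⊔ F3) _ (hC i))
  · refine sup_le ?_ ?_
    · intro s hs; exact measurableSet_generateFrom (mem_rectAlg_left hs)
    · intro s hs; exact measurableSet_generateFrom (mem_rectAlg_right hs)

lemma abs_toReal_sub_le_symmDiff {Ω : Type*} [mΩ : MeasurableSpace Ω] (P : Measure Ω)
    [IsProbabilityMeasure P] (s t : Set Ω) :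
    |(P s).toReal - (P t).toReal| ≤ (P (s ∆ t)).toReal := by
  have hne : P t + P (s ∆ t) ≠ ∞ :=
    ENNReal.add_ne_top.2 ⟨measure_ne_top _ _, measure_ne_top _ _⟩
  have hne' : P s + P (s ∆ t) ≠ ∞ :=
    ENNReal.add_ne_top.2 ⟨measure_ne_top _ _, measure_ne_top _ _⟩
  rw [abs_sub_le_iff]
  constructor
  · have hsub : s ⊆ t ∪ s ∆ t := by
      intro x hx
      by_cases h : x ∈ t
      · exact Or.inl h
      · exact Or.inr (Set.mem_symmDiff.2 (Or.inl ⟨hx, h⟩))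
    have h2 := ENNReal.toReal_mono hne ((measure_mono hsub).trans (measure_union_le t (s ∆ t)))
    rw [ENNReal.toReal_add (measure_ne_top _ _) (measure_ne_top _ _)] at h2
    linarith
  · have hsub : t ⊆ s ∪ s ∆ t := by
      intro x hx
      by_cases h : x ∈ s
      · exact Or.inl h
      · exact Or.inr (Set.mem_symmDiff.2 (Or.inr ⟨hx, h⟩))
    have h2 := ENNReal.toReal_mono hne' ((measure_mono hsub).trans (measure_union_le s (s ∆ t)))
    rw [ENNReal.toReal_add (measure_ne_top _ _) (measure_ne_top _ _)] at h2
    linarith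

lemma core_bound {Ω : Type*} [mΩ : MeasurableSpace Ω] (P : Measure Ω) [IsProbabilityMeasure P]
    (F1 F2 F3 : MeasurableSpace Ω)
    (h1 : F1 ≤ mΩ) (h2 : F2 ≤ mΩ) (h3 : F3 ≤ mΩ)
    {δ : ℝ} (hδ : 0 ≤ δ)
    (hφ1 : @phiCoef Ω mΩ P F1 (F2 ⊔ F3) ≤ δ)
    (hφ2 : @phiCoef Ω mΩ P F2 F3 ≤ δ)
    {B Δ : Set Ω} (hB : MeasurableSet[F2] B) (hΔ : Δ ∈ rectAlg F1 F3) :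
    |(P (B ∩ Δ)).toReal - (P B).toReal * (P Δ).toReal| ≤ 3 * δ := by
  obtain ⟨ι, hι, A, C, hA, hC, hd, hcov, rfl⟩ := hΔ
  haveI := hι
  have mA : ∀ i, MeasurableSet[mΩ] (A i) := fun i => h1 _ (hA i)
  have mC : ∀ i, MeasurableSet[mΩ] (C i) := fun i => h3 _ (hC i)
  have mB : MeasurableSet[mΩ] B := h2 _ hB
  have hdisj : Pairwise (Function.onFun Disjoint fun i => A i ∩ C i) :=
    fun i j hij => ((hd hij).mono Set.inter_subset_left Set.inter_subset_left)
  have hdisj2 : Pairwise (Function.onFun Disjoint fun i => B ∩ (A i ∩ C i)) :=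
    fun i j hij => ((hdisj hij).mono Set.inter_subset_right Set.inter_subset_right)
  have hPΔ : (P (⋃ i, A i ∩ C i)).toReal = ∑ i, (P (A i ∩ C i)).toReal := by
    rw [measure_iUnion (μ := P) hdisj (fun i => (mA i).inter (mC i)), tsum_fintype]
    exact ENNReal.toReal_sum (f := fun i => P (A i ∩ C i)) (fun i _ => measure_ne_top _ _)
  have hPBΔ : (P (B ∩ ⋃ i, A i ∩ C i)).toReal = ∑ i, (P (B ∩ (A i ∩ C i))).toReal := by
    rw [Set.inter_iUnion, measure_iUnion (μ := P) hdisj2 (fun i => mB.inter ((mA i).inter (mC i))),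
      tsum_fintype]
    exact ENNReal.toReal_sum (f := fun i => P (B ∩ (A i ∩ C i))) (fun i _ => measure_ne_top _ _)
  have hsumA : ∑ i, (P (A i)).toReal = 1 := by
    have h := measure_iUnion (μ := P) hd mA
    rw [hcov, measure_univ, tsum_fintype] at h
    rw [← ENNReal.toReal_sum (f := fun i => P (A i)) (fun i _ => measure_ne_top _ _), ← h,
      ENNReal.toReal_one]
  have hb0 : 0 ≤ (P B).toReal := ENNReal.toReal_nonneg
  have hb1 : (P B).toReal ≤ 1 := by
    simpa using ENNReal.toReal_mono ENNReal.one_ne_top (prob_le_one (μ := P) (s := B))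
  have hterm : ∀ i, |(P (B ∩ (A i ∩ C i))).toReal - (P B).toReal * (P (A i ∩ C i)).toReal|
      ≤ 3 * δ * (P (A i)).toReal := by
    intro i
    have hCB : MeasurableSet[F2 ⊔ F3] (C i ∩ B) :=
      ((le_sup_right : F3 ≤ F2 ⊔ F3) _ (hC i)).inter ((le_sup_left : F2 ≤ F2 ⊔ F3) _ hB)
    have hC' : MeasurableSet[F2 ⊔ F3] (C i) := (le_sup_right : F3 ≤ F2 ⊔ F3) _ (hC i)
    have ht := @phi_pointwise Ω mΩ P inferInstance F1 (F2 ⊔ F3) δ hφ1 _ _ (hA i) hCB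
    have hu := @phi_pointwise Ω mΩ P inferInstance F2 F3 δ hφ2 _ _ hB (hC i)
    have hv := @phi_pointwise Ω mΩ P inferInstance F1 (F2 ⊔ F3) δ hφ1 _ _ (hA i) hC'
    have e2 : C i ∩ B = B ∩ C i := Set.inter_comm _ _
    rw [e2] at ht
    have e1 : B ∩ (A i ∩ C i) = A i ∩ (B ∩ C i) := Set.inter_left_comm _ _ _
    rw [e1]
    set a := (P (A i)).toReal with ha_def
    set b := (P B).toReal with hb_def
    set c := (P (C i)).toReal with hc_def
    set q := (P (B ∩ C i)).toReal with hq_def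
    set r := (P (A i ∩ (B ∩ C i))).toReal with hr_def
    set s := (P (A i ∩ C i)).toReal with hs_def
    have ha0 : 0 ≤ a := ENNReal.toReal_nonneg
    have key : r - b * s = (r - a * q) + (a * (q - b * c) + b * (a * c - s)) := by ring
    rw [key]
    have k1 := abs_add_le (r - a * q) (a * (q - b * c) + b * (a * c - s))
    have k2 := abs_add_le (a * (q - b * c)) (b * (a * c - s))
    have k3 : |a * (q - b * c)| = a * |q - b * c| := by rw [abs_mul, abs_of_nonneg ha0]
    have k4 : |b * (a * c - s)| = b * |a * c - s| := by rw [abs_mul, abs_of_nonneg hb0]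
    have k5 : |a * c - s| = |s - a * c| := abs_sub_comm _ _
    have i1 : a * |q - b * c| ≤ a * (δ * b) := mul_le_mul_of_nonneg_left hu ha0
    have i2 : b * |s - a * c| ≤ b * (δ * a) := mul_le_mul_of_nonneg_left hv hb0
    nlinarith [mul_nonneg hδ ha0, mul_nonneg (mul_nonneg hδ ha0) (sub_nonneg.2 hb1),
      mul_nonneg hδ (mul_nonneg ha0 hb0)]
  rw [hPΔ, hPBΔ, Finset.mul_sum, ← Finset.sum_sub_distrib]
  calc |∑ i, ((P (B ∩ (A i ∩ C i))).toReal - (P B).toReal * (P (A i ∩ C i)).toReal)|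
      ≤ ∑ i, |(P (B ∩ (A i ∩ C i))).toReal - (P B).toReal * (P (A i ∩ C i)).toReal| :=
        Finset.abs_sum_le_sum_abs _ _
    _ ≤ ∑ i, 3 * δ * (P (A i)).toReal := Finset.sum_le_sum fun i _ => hterm i
    _ = 3 * δ := by rw [← Finset.mul_sum, hsumA, mul_one]

/-- Lemma 3.3: if `φ(ℱ₁, σ(ℱ₂,ℱ₃)) ≤ δ` and `φ(ℱ₂,ℱ₃) ≤ δ` then
`α(ℱ₂, σ(ℱ₁,ℱ₃)) ≤ 3δ`. -/
theorem alpha_le_three_phi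
    {Ω : Type*} [mΩ : MeasurableSpace Ω] (P : Measure Ω) [IsProbabilityMeasure P]
    (F1 F2 F3 : MeasurableSpace Ω)
    (h1 : F1 ≤ mΩ) (h2 : F2 ≤ mΩ) (h3 : F3 ≤ mΩ)
    (δ : ℝ) (hδ : 0 ≤ δ)
    (hφ1 : @phiCoef Ω mΩ P F1 (F2 ⊔ F3) ≤ δ)
    (hφ2 : @phiCoef Ω mΩ P F2 F3 ≤ δ) :
    @alphaCoef Ω mΩ P F2 (F1 ⊔ F3) ≤ 3 * δ := by
  have h13 : F1 ⊔ F3 ≤ mΩ := sup_le h1 h3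
  refine Real.sSup_le ?_ (by positivity)
  rintro x ⟨B, Δ, hB, hΔ, rfl⟩
  refine le_of_forall_pos_le_add fun ε hε => ?_
  haveI htr : @IsFiniteMeasure Ω (F1 ⊔ F3) (P.trim h13) := isFiniteMeasure_trim h13
  have hdense : @Measure.MeasureDense Ω (F1 ⊔ F3) (P.trim h13) (rectAlg F1 F3) :=
    @Measure.MeasureDense.of_generateFrom_isSetAlgebra_finite Ω (F1 ⊔ F3) (P.trim h13)
      (rectAlg F1 F3) htr (isSetAlgebra_rectAlg F1 F3) (generateFrom_rectAlg F1 F3).symm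
  have hΔfin : P.trim h13 Δ ≠ ∞ := by
    rw [trim_measurableSet_eq h13 hΔ]; exact measure_ne_top P Δ
  obtain ⟨t, ht, hlt⟩ := @Measure.MeasureDense.approx Ω (F1 ⊔ F3) (P.trim h13) (rectAlg F1 F3)
    hdense Δ hΔ hΔfin (ε / 2) (by positivity)
  have htm : MeasurableSet[F1 ⊔ F3] t :=
    @Measure.MeasureDense.measurable Ω (F1 ⊔ F3) (P.trim h13) (rectAlg F1 F3) hdense t ht
  have hsd : MeasurableSet[F1 ⊔ F3] (Δ ∆ t) := hΔ.symmDiff htm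
  have hlt' : P (Δ ∆ t) < ENNReal.ofReal (ε / 2) := by
    rwa [trim_measurableSet_eq h13 hsd] at hlt
  have he : (P (Δ ∆ t)).toReal < ε / 2 := by
    have := (ENNReal.toReal_lt_toReal (measure_ne_top _ _) ENNReal.ofReal_ne_top).2 hlt'
    rwa [ENNReal.toReal_ofReal (by positivity)] at this
  have hcore := @core_bound Ω mΩ P inferInstance F1 F2 F3 h1 h2 h3 δ hδ hφ1 hφ2 B t hB ht
  have hsub : (B ∩ Δ) ∆ (B ∩ t) ⊆ Δ ∆ t := by
    intro x hx
    rcases Set.mem_symmDiff.1 hx with ⟨⟨hxB, hxΔ⟩, hnt⟩ | ⟨⟨hxB, hxt⟩, hnΔ⟩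
    · exact Set.mem_symmDiff.2 (Or.inl ⟨hxΔ, fun hxt => hnt ⟨hxB, hxt⟩⟩)
    · exact Set.mem_symmDiff.2 (Or.inr ⟨hxt, fun hxΔ => hnΔ ⟨hxB, hxΔ⟩⟩)
  have hA1 : |(P (B ∩ Δ)).toReal - (P (B ∩ t)).toReal| ≤ (P (Δ ∆ t)).toReal :=
    (@abs_toReal_sub_le_symmDiff Ω mΩ P inferInstance _ _).trans
      (ENNReal.toReal_mono (measure_ne_top _ _) (measure_mono hsub))
  have hA2 : |(P Δ).toReal - (P t).toReal| ≤ (P (Δ ∆ t)).toReal :=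
    @abs_toReal_sub_le_symmDiff Ω mΩ P inferInstance Δ t
  have hb0 : 0 ≤ (P B).toReal := ENNReal.toReal_nonneg
  have hb1 : (P B).toReal ≤ 1 := by
    simpa using ENNReal.toReal_mono ENNReal.one_ne_top (prob_le_one (μ := P) (s := B))
  set X := (P (B ∩ Δ)).toReal
  set X' := (P (B ∩ t)).toReal
  set Y := (P Δ).toReal
  set Y' := (P t).toReal
  set b := (P B).toReal
  set e := (P (Δ ∆ t)).toReal
  have key : X - b * Y = (X' - b * Y') + ((X - X') + b * (Y' - Y)) := by ring
  rw [key]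
  have k1 := abs_add_le (X' - b * Y') ((X - X') + b * (Y' - Y))
  have k2 := abs_add_le (X - X') (b * (Y' - Y))
  have k3 : |b * (Y' - Y)| ≤ e := by
    rw [abs_mul, abs_of_nonneg hb0, abs_sub_comm]
    exact (mul_le_of_le_one_left (abs_nonneg _) hb1).trans hA2
  linarith
end

section
/- Let p, q ∈ (0,1) and set ϱ = p/(p + q(1−p)) and ρ = p/(p + q), so that ρ < ϱ. Then Σ_{k=0}^∞ |ϱ(1−ϱ)^k − ρ(1−ρ)^k| ≤ 2(ϱ − ρ)/(ρϱ) = 2q; consequently d_TV(Geo(ϱ), Geo(ρ)) ≤ 2q. -/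
open MeasureTheory

set_option maxHeartbeats 1000000

lemma geo_summable {r : ℝ} (h0 : 0 < r) (h1 : r < 1) :
    Summable (fun k : ℕ => r * (1 - r) ^ k) :=
  (summable_geometric_of_lt_one (by linarith) (by linarith)).mul_left r

lemma geo_tsum_pow {r : ℝ} (h0 : 0 < r) (h1 : r < 1) :
    ∑' k : ℕ, (1 - r) ^ k = r⁻¹ := by
  rw [tsum_geometric_of_lt_one (by linarith) (by linarith)]
  ring_nf

lemma geo_apply {r : ℝ} (h0 : 0 < r) (h1 : r < 1) (s : Set ℕ) :
    ((geoMeasure r) s).toReal = ∑' k, s.indicator (fun k => r * (1 - r) ^ k) k := by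
  have hnn : ∀ k : ℕ, 0 ≤ r * (1 - r) ^ k := fun k => mul_nonneg h0.le (pow_nonneg (by linarith) k)
  have hsum : Summable (fun k : ℕ => r * (1 - r) ^ k) := geo_summable h0 h1
  have : (geoMeasure r) s = ENNReal.ofReal (∑' k, s.indicator (fun k => r * (1 - r) ^ k) k) := by
    rw [geoMeasure, Measure.sum_apply _ (MeasurableSet.of_discrete)]
    rw [ENNReal.ofReal_tsum_of_nonneg (fun k => Set.indicator_nonneg (fun k _ => hnn k) k)
      (hsum.indicator s)]
    congr 1
    ext k
    rw [Measure.smul_apply, Measure.dirac_apply' _ (MeasurableSet.of_discrete)]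
    by_cases hk : k ∈ s
    · simp [hk]
    · simp [hk]
  rw [this, ENNReal.toReal_ofReal (tsum_nonneg (fun k => Set.indicator_nonneg (fun k _ => hnn k) k))]

lemma l1_summable {ρ ϱ : ℝ} (h0 : 0 < ρ) (h1 : ρ < ϱ) (h2 : ϱ < 1) :
    Summable (fun k : ℕ => |ϱ * (1 - ϱ) ^ k - ρ * (1 - ρ) ^ k|) := by
  have hρ1 : ρ < 1 := h1.trans h2
  have hϱ0 : 0 < ϱ := h0.trans h1
  apply Summable.of_nonneg_of_le (fun k => abs_nonneg _)
    (fun k => (abs_sub _ _).trans ?_) ((geo_summable hϱ0 h2).add (geo_summable h0 hρ1))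
  rw [abs_of_nonneg (mul_nonneg hϱ0.le (pow_nonneg (by linarith) k)), abs_of_nonneg (mul_nonneg h0.le (pow_nonneg (by linarith) k))]

lemma l1_bound {ρ ϱ : ℝ} (h0 : 0 < ρ) (h1 : ρ < ϱ) (h2 : ϱ < 1) :
    ∑' k : ℕ, |ϱ * (1 - ϱ) ^ k - ρ * (1 - ρ) ^ k| ≤ 2 * (ϱ - ρ) / ϱ := by
  have hρ1 : ρ < 1 := h1.trans h2
  have hϱ0 : 0 < ϱ := h0.trans h1
  have hab : ∀ k : ℕ, (1 - ϱ) ^ k ≤ (1 - ρ) ^ k := fun k =>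
    pow_le_pow_left₀ (by linarith) (by linarith) k
  have hsa : Summable (fun k : ℕ => (1 - ϱ) ^ k) :=
    summable_geometric_of_lt_one (by linarith) (by linarith)
  have hsb : Summable (fun k : ℕ => (1 - ρ) ^ k) :=
    summable_geometric_of_lt_one (by linarith) (by linarith)
  have hg : Summable (fun k : ℕ => (ϱ - ρ) * (1 - ϱ) ^ k + ρ * ((1 - ρ) ^ k - (1 - ϱ) ^ k)) :=
    (hsa.mul_left _).add ((hsb.sub hsa).mul_left _)
  have hpt : ∀ k : ℕ, |ϱ * (1 - ϱ) ^ k - ρ * (1 - ρ) ^ k|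
      ≤ (ϱ - ρ) * (1 - ϱ) ^ k + ρ * ((1 - ρ) ^ k - (1 - ϱ) ^ k) := by
    intro k
    have h3 : ϱ * (1 - ϱ) ^ k - ρ * (1 - ρ) ^ k
        = (ϱ - ρ) * (1 - ϱ) ^ k - ρ * ((1 - ρ) ^ k - (1 - ϱ) ^ k) := by ring
    rw [h3]
    refine (abs_sub _ _).trans ?_
    have hk := hab k
    rw [abs_of_nonneg (mul_nonneg (by linarith) (pow_nonneg (by linarith) k)), abs_of_nonneg (by nlinarith [pow_nonneg (by linarith : (0:ℝ) ≤ 1 - ϱ) k])]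
  calc ∑' k : ℕ, |ϱ * (1 - ϱ) ^ k - ρ * (1 - ρ) ^ k|
      ≤ ∑' k : ℕ, ((ϱ - ρ) * (1 - ϱ) ^ k + ρ * ((1 - ρ) ^ k - (1 - ϱ) ^ k)) :=
        Summable.tsum_le_tsum hpt (l1_summable h0 h1 h2) hg
    _ = (ϱ - ρ) * ϱ⁻¹ + ρ * (ρ⁻¹ - ϱ⁻¹) := by
        rw [Summable.tsum_add (hsa.mul_left _) ((hsb.sub hsa).mul_left _), tsum_mul_left, tsum_mul_left,
          Summable.tsum_sub hsb hsa, geo_tsum_pow hϱ0 h2, geo_tsum_pow h0 hρ1]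
    _ = 2 * (ϱ - ρ) / ϱ := by field_simp; ring

/-- Comparison of the geometric distributions with parameters `ϱ = p/(p+q(1−p))`
and `ρ = p/(p+q)`: the ℓ¹-distance of the point masses is at most
`2(ϱ−ρ)/(ρϱ) = 2q`, hence `d_TV(Geo(ϱ), Geo(ρ)) ≤ 2q`. -/
theorem geometric_distributions_close
    (p q : ℝ) (hp : p ∈ Set.Ioo (0:ℝ) 1) (hq : q ∈ Set.Ioo (0:ℝ) 1) :
    p / (p + q) < p / (p + q * (1 - p)) ∧
    (∑' k : ℕ, |p / (p + q * (1 - p)) * (1 - p / (p + q * (1 - p))) ^ k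
        - p / (p + q) * (1 - p / (p + q)) ^ k|)
      ≤ 2 * (p / (p + q * (1 - p)) - p / (p + q)) /
          ((p / (p + q)) * (p / (p + q * (1 - p)))) ∧
    2 * (p / (p + q * (1 - p)) - p / (p + q)) /
        ((p / (p + q)) * (p / (p + q * (1 - p)))) = 2 * q ∧
    dTV (geoMeasure (p / (p + q * (1 - p)))) (geoMeasure (p / (p + q))) ≤ 2 * q := by
  obtain ⟨hp0, hp1⟩ := hp
  obtain ⟨hq0, hq1⟩ := hq
  have hd1 : (0:ℝ) < p + q := by linarith
  have hd2 : (0:ℝ) < p + q * (1 - p) := by nlinarith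
  set ρ := p / (p + q) with hρdef
  set ϱ := p / (p + q * (1 - p)) with hϱdef
  have hρ0 : 0 < ρ := div_pos hp0 hd1
  have hϱ0 : 0 < ϱ := div_pos hp0 hd2
  have hlt : ρ < ϱ := by
    apply div_lt_div_of_pos_left hp0 hd2
    nlinarith
  have hϱ1 : ϱ < 1 := by
    rw [hϱdef, div_lt_one hd2]; nlinarith
  have hρ1 : ρ < 1 := hlt.trans hϱ1
  have heq : 2 * (ϱ - ρ) / (ρ * ϱ) = 2 * q := by
    rw [hρdef, hϱdef]
    field_simp
    ring
  have hmid : 2 * (ϱ - ρ) / ϱ ≤ 2 * (ϱ - ρ) / (ρ * ϱ) := by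
    apply div_le_div_of_nonneg_left (by linarith) (by positivity)
    nlinarith
  have hl1 : (∑' k : ℕ, |ϱ * (1 - ϱ) ^ k - ρ * (1 - ρ) ^ k|) ≤ 2 * (ϱ - ρ) / (ρ * ϱ) :=
    (l1_bound hρ0 hlt hϱ1).trans hmid
  refine ⟨hlt, hl1, heq, ?_⟩
  apply Real.sSup_le _ (by positivity)
  rintro x ⟨s, -, rfl⟩
  rw [geo_apply hϱ0 hϱ1 s, geo_apply hρ0 hρ1 s]
  have hsf : Summable (fun k : ℕ => ϱ * (1 - ϱ) ^ k) := geo_summable hϱ0 hϱ1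
  have hsg : Summable (fun k : ℕ => ρ * (1 - ρ) ^ k) := geo_summable hρ0 hρ1
  rw [← Summable.tsum_sub (hsf.indicator s) (hsg.indicator s)]
  have hpt : ∀ k : ℕ, |s.indicator (fun k => ϱ * (1 - ϱ) ^ k) k
      - s.indicator (fun k => ρ * (1 - ρ) ^ k) k| ≤ |ϱ * (1 - ϱ) ^ k - ρ * (1 - ρ) ^ k| := by
    intro k
    by_cases hk : k ∈ s
    · simp [Set.indicator_of_mem hk]
    · simp [Set.indicator_of_notMem hk]
  have hsl : Summable (fun k : ℕ => |s.indicator (fun k => ϱ * (1 - ϱ) ^ k) k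
      - s.indicator (fun k => ρ * (1 - ρ) ^ k) k|) :=
    Summable.of_nonneg_of_le (fun k => abs_nonneg _) hpt (l1_summable hρ0 hlt hϱ1)
  calc |∑' k : ℕ, (s.indicator (fun k => ϱ * (1 - ϱ) ^ k) k
          - s.indicator (fun k => ρ * (1 - ρ) ^ k) k)|
      ≤ ∑' k : ℕ, |s.indicator (fun k => ϱ * (1 - ϱ) ^ k) k
          - s.indicator (fun k => ρ * (1 - ρ) ^ k) k| := by
        have h := norm_tsum_le_tsum_norm (f := fun k : ℕ => s.indicator (fun k => ϱ * (1 - ϱ) ^ k) k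
            - s.indicator (fun k => ρ * (1 - ρ) ^ k) k) (by simpa [Real.norm_eq_abs] using hsl)
        simpa [Real.norm_eq_abs] using h
    _ ≤ ∑' k : ℕ, |ϱ * (1 - ϱ) ^ k - ρ * (1 - ρ) ^ k| :=
        Summable.tsum_le_tsum hpt hsl (l1_summable hρ0 hlt hϱ1)
    _ ≤ 2 * (ϱ - ρ) / (ρ * ϱ) := hl1
    _ = 2 * q := heq
end

section
/- Let D ∈ ℱ_{0,n−1} and E ∈ ℱ_{0,m−1} be nonempty sets, and let k ≥ 0 and 0 ≤ r < m be integers with k + r ≥ n. Then P(D ∩ T^{−k}E) ≤ P(D)·( P(T^r E) + φ(k + r − n + 1) ). -/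
open MeasureTheory Filter Set

/-! ### Auxiliary lemmas -/

section ShiftAux
variable {𝓐 : Type*} [m𝓐 : MeasurableSpace 𝓐]

omit m𝓐 in
lemma shift_iterate_apply (j : ℕ) (ω : ℕ → 𝓐) (i : ℕ) :
    (shift 𝓐)^[j] ω i = ω (i + j) := by
  induction j generalizing ω i with
  | zero => rfl
  | succ j ih =>
      rw [Function.iterate_succ_apply, ih]
      simp [shift, Nat.add_assoc, Nat.add_comm 1 j]

lemma coordAlg_le_pi (s : Set ℕ) : coordAlg 𝓐 s ≤ MeasurableSpace.pi := by
  refine iSup₂_le fun i _ => ?_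
  exact Measurable.comap_le (measurable_pi_apply i)

lemma measurable_shift_iterate (j : ℕ) :
    @Measurable _ _ (coordAlg 𝓐 (Set.Ici j)) _ ((shift 𝓐)^[j]) := by
  refine @measurable_pi_lambda _ _ _ (coordAlg 𝓐 (Set.Ici j)) _ _ (fun i => ?_)
  have h : (fun ω : ℕ → 𝓐 => (shift 𝓐)^[j] ω i) = fun ω => ω (i + j) := by
    funext ω; exact shift_iterate_apply j ω i
  rw [h]
  refine Measurable.of_comap_le ?_
  exact le_biSup (fun i => m𝓐.comap fun ω : ℕ → 𝓐 => ω i) (Nat.le_add_left j i)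

omit m𝓐 in
lemma shift_iterate_image_eq (r : ℕ) (E : Set (ℕ → 𝓐)) :
    (shift 𝓐)^[r] '' E =
      ⋃ a : Fin r → 𝓐,
        (fun η : ℕ → 𝓐 => fun i => if h : i < r then a ⟨i, h⟩ else η (i - r)) ⁻¹' E := by
  ext η
  constructor
  · rintro ⟨ω, hω, rfl⟩
    refine mem_iUnion.2 ⟨fun i => ω i, ?_⟩
    have : (fun i => if h : i < r then ω i else (shift 𝓐)^[r] ω (i - r)) = ω := by
      funext i
      by_cases h : i < r
      · simp [h]
      · simp only [h, dif_neg, not_false_iff]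
        rw [shift_iterate_apply]
        congr 1
        omega
    show (fun i => if h : i < r then ω i else (shift 𝓐)^[r] ω (i - r)) ∈ E
    rw [this]; exact hω
  · intro hη
    rcases mem_iUnion.1 hη with ⟨a, ha⟩
    refine ⟨_, ha, ?_⟩
    funext i
    rw [shift_iterate_apply]
    have h : ¬ (i + r < r) := by omega
    simp only [h, dif_neg, not_false_iff]
    congr 1
    omega

lemma measurableSet_shift_iterate_image [Countable 𝓐] {r : ℕ} {E : Set (ℕ → 𝓐)}
    (hE : MeasurableSet E) : MeasurableSet ((shift 𝓐)^[r] '' E) := by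
  rw [shift_iterate_image_eq]
  refine MeasurableSet.iUnion fun a => ?_
  have hg : Measurable (fun η : ℕ → 𝓐 => fun i => if h : i < r then a ⟨i, h⟩ else η (i - r)) := by
    refine measurable_pi_lambda _ fun i => ?_
    by_cases h : i < r
    · simp only [h, dif_pos]; exact measurable_const
    · simp only [h, dif_neg, not_false_iff]; exact measurable_pi_apply _
  exact hg hE

end ShiftAux

section PhiAux
variable {Ω : Type*} {G H : MeasurableSpace Ω} [mΩ : MeasurableSpace Ω]
  (P : Measure Ω) [IsProbabilityMeasure P]

/-- The set of values whose supremum defines `phiCoef`. -/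
def phiSet (P : Measure Ω) (G H : MeasurableSpace Ω) : Set ℝ :=
  {x | ∃ Γ Δ : Set Ω, MeasurableSet[G] Γ ∧ MeasurableSet[H] Δ ∧ P Γ ≠ 0 ∧
    x = |(P (Γ ∩ Δ)).toReal / (P Γ).toReal - (P Δ).toReal|}

omit [IsProbabilityMeasure P] in
lemma phiCoef_eq : phiCoef P G H = sSup (phiSet P G H) := rfl

lemma phiSet_bdd : ∀ x ∈ phiSet P G H, x ≤ 1 := by
  rintro x ⟨Γ, Δ, hΓ, hΔ, hΓ0, rfl⟩
  have hb : 0 < (P Γ).toReal := ENNReal.toReal_pos hΓ0 (measure_ne_top P Γ)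
  have ha : (P (Γ ∩ Δ)).toReal ≤ (P Γ).toReal :=
    ENNReal.toReal_mono (measure_ne_top P Γ) (measure_mono inter_subset_left)
  have h1 : (P (Γ ∩ Δ)).toReal / (P Γ).toReal ≤ 1 := by
    rw [div_le_one hb]; exact ha
  have h0 : 0 ≤ (P (Γ ∩ Δ)).toReal / (P Γ).toReal :=
    div_nonneg ENNReal.toReal_nonneg hb.le
  have hΔ1 : (P Δ).toReal ≤ 1 := by
    have h := prob_le_one (μ := P) (s := Δ)
    calc (P Δ).toReal ≤ (1 : ENNReal).toReal := ENNReal.toReal_mono ENNReal.one_ne_top h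
      _ = 1 := by simp
  rw [abs_sub_le_iff]
  constructor <;> linarith [ENNReal.toReal_nonneg (a := P Δ)]

lemma phiCoef_le_one : phiCoef P G H ≤ 1 := by
  rw [phiCoef_eq]; exact Real.sSup_le (phiSet_bdd P) zero_le_one

lemma phiCoef_bound {Γ Δ : Set Ω}
    (hΓ : MeasurableSet[G] Γ) (hΔ : MeasurableSet[H] Δ) (hΓ0 : P Γ ≠ 0) :
    (P (Γ ∩ Δ)).toReal ≤ (P Γ).toReal * ((P Δ).toReal + phiCoef P G H) := by
  have hb : 0 < (P Γ).toReal := ENNReal.toReal_pos hΓ0 (measure_ne_top P Γ)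
  have hmem : |(P (Γ ∩ Δ)).toReal / (P Γ).toReal - (P Δ).toReal| ∈ phiSet P G H :=
    ⟨Γ, Δ, hΓ, hΔ, hΓ0, rfl⟩
  have hle : |(P (Γ ∩ Δ)).toReal / (P Γ).toReal - (P Δ).toReal| ≤ phiCoef P G H := by
    rw [phiCoef_eq]; exact le_csSup ⟨1, phiSet_bdd P⟩ hmem
  have h2 : (P (Γ ∩ Δ)).toReal / (P Γ).toReal - (P Δ).toReal ≤ phiCoef P G H :=
    (le_abs_self _).trans hle
  have h3 : (P (Γ ∩ Δ)).toReal / (P Γ).toReal ≤ (P Δ).toReal + phiCoef P G H := by linarith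
  calc (P (Γ ∩ Δ)).toReal
      = (P Γ).toReal * ((P (Γ ∩ Δ)).toReal / (P Γ).toReal) := by field_simp
    _ ≤ (P Γ).toReal * ((P Δ).toReal + phiCoef P G H) :=
        mul_le_mul_of_nonneg_left h3 hb.le

end PhiAux

lemma phiCoef_le_phiMix {𝓐 : Type*} [MeasurableSpace 𝓐] (P : Measure (ℕ → 𝓐))
    [IsProbabilityMeasure P] (m' j : ℕ) :
    phiCoef P (coordAlg 𝓐 (Set.Iic m')) (coordAlg 𝓐 (Set.Ici (m' + j))) ≤ phiMix 𝓐 P j := by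
  refine le_ciSup (f := fun m => phiCoef P (coordAlg 𝓐 (Set.Iic m))
    (coordAlg 𝓐 (Set.Ici (m + j)))) ?_ m'
  refine ⟨1, ?_⟩
  rintro x ⟨m, rfl⟩
  exact phiCoef_le_one P

/-- The inequality (4.7): for nonempty `D ∈ ℱ_{0,n−1}`, `E ∈ ℱ_{0,m−1}`, `0 ≤ r < m`
and `k + r ≥ n`, one has `P(D ∩ T^{−k}E) ≤ P(D)(P(T^r E) + φ(k+r−n+1))`. -/
theorem shifted_intersection_phi_bound
    {𝓐 : Type*} [MeasurableSpace 𝓐] [DiscreteMeasurableSpace 𝓐] [Countable 𝓐] [Nontrivial 𝓐]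
    (P : Measure (ℕ → 𝓐)) [IsProbabilityMeasure P]
    (hinv : MeasurePreserving (shift 𝓐) P P)
    (n m k r : ℕ) (hn : 1 ≤ n) (hm : 1 ≤ m) (hr : r < m) (hkr : n ≤ k + r)
    (D E : Set (ℕ → 𝓐))
    (hD : MeasurableSet[coordAlg 𝓐 (Set.Iio n)] D) (hDne : D.Nonempty)
    (hE : MeasurableSet[coordAlg 𝓐 (Set.Iio m)] E) (hEne : E.Nonempty) :
    (P (D ∩ (shift 𝓐)^[k] ⁻¹' E)).toReal
      ≤ (P D).toReal *
        ((P ((shift 𝓐)^[r] '' E)).toReal + phiMix 𝓐 P (k + r + 1 - n)) := by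
  set F : Set (ℕ → 𝓐) := (shift 𝓐)^[r] '' E with hF
  have hEmeas : MeasurableSet E := coordAlg_le_pi (Set.Iio m) E hE
  have hFmeas : MeasurableSet F := measurableSet_shift_iterate_image hEmeas
  set Δ : Set (ℕ → 𝓐) := (shift 𝓐)^[k + r] ⁻¹' F with hΔdef
  -- step 1 : D ∩ T^{-k} E ⊆ D ∩ Δ
  have hsub : D ∩ (shift 𝓐)^[k] ⁻¹' E ⊆ D ∩ Δ := by
    refine inter_subset_inter_right _ ?_
    intro ω hω
    show (shift 𝓐)^[k + r] ω ∈ F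
    have : (shift 𝓐)^[k + r] ω = (shift 𝓐)^[r] ((shift 𝓐)^[k] ω) := by
      rw [Nat.add_comm k r, Function.iterate_add_apply]
    rw [this]
    exact ⟨_, hω, rfl⟩
  have step1 : (P (D ∩ (shift 𝓐)^[k] ⁻¹' E)).toReal ≤ (P (D ∩ Δ)).toReal :=
    ENNReal.toReal_mono (measure_ne_top P _) (measure_mono hsub)
  -- trivial case P D = 0
  by_cases hPD : P D = 0
  · have h0 : P (D ∩ (shift 𝓐)^[k] ⁻¹' E) = 0 :=
      measure_mono_null inter_subset_left hPD
    simp [h0, hPD]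
  -- main case
  have hD' : MeasurableSet[coordAlg 𝓐 (Set.Iic (n - 1))] D := by
    have hIio : Set.Iio n = Set.Iic (n - 1) := by
      ext i; simp only [mem_Iio, mem_Iic]; omega
    rwa [hIio] at hD
  have hΔmeas : MeasurableSet[coordAlg 𝓐 (Set.Ici (k + r))] Δ :=
    measurable_shift_iterate (k + r) hFmeas
  have step2 : (P (D ∩ Δ)).toReal ≤ (P D).toReal * ((P Δ).toReal +
      phiCoef P (coordAlg 𝓐 (Set.Iic (n - 1))) (coordAlg 𝓐 (Set.Ici (k + r)))) :=
    phiCoef_bound P hD' hΔmeas hPD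
  have hPΔ : P Δ = P F := (hinv.iterate (k + r)).measure_preimage hFmeas.nullMeasurableSet
  have hphi : phiCoef P (coordAlg 𝓐 (Set.Iic (n - 1))) (coordAlg 𝓐 (Set.Ici (k + r)))
      ≤ phiMix 𝓐 P (k + r + 1 - n) := by
    have hidx : (n - 1) + (k + r + 1 - n) = k + r := by omega
    have := phiCoef_le_phiMix P (n - 1) (k + r + 1 - n) (𝓐 := 𝓐)
    rwa [hidx] at this
  have step3 : (P D).toReal * ((P Δ).toReal +
      phiCoef P (coordAlg 𝓐 (Set.Iic (n - 1))) (coordAlg 𝓐 (Set.Ici (k + r))))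
      ≤ (P D).toReal * ((P F).toReal + phiMix 𝓐 P (k + r + 1 - n)) := by
    rw [hPΔ]
    exact mul_le_mul_of_nonneg_left (add_le_add_right hphi _) ENNReal.toReal_nonneg
  exact step1.trans (step2.trans step3)
end

section
/- Let ξ₀, ξ₁, ξ₂, … be independent identically distributed random variables with values in a measurable space, and let Γ_N, Δ_N be measurable sets with Γ_N ∩ Δ_N = ∅ such that lim_{N→∞} N·P(ξ₀ ∈ Γ_N)/λ = 1 and lim_{N→∞} N·P(ξ₀ ∈ Δ_N)/ν = 1 for some constants λ, ν > 0. Set τ_N = min{ n ≥ 0 : ξ_n ∈ Γ_N }. Then S_{τ_N} = Σ_{n=0}^{τ_N − 1} 1_{Δ_N}(ξ_n) converges in distribution as N → ∞ to a geometric random variable with parameter λ/(λ + ν). -/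
open MeasureTheory Filter ProbabilityTheory

open scoped Classical ENNReal

section Key

variable {Ω α : Type*} [MeasurableSpace Ω] [MeasurableSpace α]
    (P : Measure Ω) [IsProbabilityMeasure P] (ξ : ℕ → Ω → α)

lemma key (hmeas : ∀ n, Measurable (ξ n))
    (hindep : iIndepFun ξ P)
    (hident : ∀ n, P.map (ξ n) = P.map (ξ 0)) (A B : Set α) (hA : MeasurableSet A) (hB : MeasurableSet B)
    (hd : A ∩ B = ∅) (hp : 0 < (P (ξ 0 ⁻¹' A)).toReal) (k : ℕ) :
    (P {ω | (∑ n ∈ Finset.range (sInf {n | ξ n ω ∈ A}),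
        B.indicator (fun _ => 1) (ξ n ω)) = k}).toReal
      = (P (ξ 0 ⁻¹' A)).toReal * (P (ξ 0 ⁻¹' B)).toReal ^ k /
        ((P (ξ 0 ⁻¹' A)).toReal + (P (ξ 0 ⁻¹' B)).toReal) ^ (k + 1) := by
  -- notation
  set p : ℝ≥0∞ := P (ξ 0 ⁻¹' A) with hp_def
  set q : ℝ≥0∞ := P (ξ 0 ⁻¹' B) with hq_def
  set r : ℝ≥0∞ := P (ξ 0 ⁻¹' (A ∪ B)ᶜ) with hr_def
  have hpre : ∀ n (T : Set α), MeasurableSet T → P (ξ n ⁻¹' T) = P (ξ 0 ⁻¹' T) := by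
    intro n T hT
    rw [← Measure.map_apply (hmeas n) hT, hident n, Measure.map_apply (hmeas 0) hT]
  -- p + q + r = 1
  have hpq : p + q = P (ξ 0 ⁻¹' (A ∪ B)) := by
    rw [Set.preimage_union, measure_union _ ((hmeas 0) hB)]
    exact Set.disjoint_left.2 fun ω hωA hωB => by
      have : ξ 0 ω ∈ A ∩ B := ⟨hωA, hωB⟩
      simp [hd] at this
  have hpqr : p + q + r = 1 := by
    rw [hpq, hr_def]
    rw [Set.preimage_compl]
    rw [measure_add_measure_compl ((hmeas 0) (hA.union hB))]
    exact measure_univ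
  classical
  have hABc : MeasurableSet ((A ∪ B)ᶜ) := (hA.union hB).compl
  set sets : ℕ → Finset ℕ → ℕ → Set α := fun m s i =>
    if i = m then A else if i ∈ s then B else (A ∪ B)ᶜ with hsets_def
  have hsets_meas : ∀ m s i, MeasurableSet (sets m s i) := by
    intro m s i
    simp only [hsets_def]
    split_ifs <;> [exact hA; exact hB; exact hABc]
  set C : ℕ → Finset ℕ → Set Ω := fun m s =>
    ⋂ i ∈ Finset.range (m + 1), ξ i ⁻¹' (sets m s i) with hC_def
  have hCmeasure : ∀ m (s : Finset ℕ), s ⊆ Finset.range m → s.card = k →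
      P (C m s) = p * (q ^ k * r ^ (m - k)) := by
    intro m s hs hcard
    rw [hC_def]
    rw [hindep.measure_inter_preimage_eq_mul (Finset.range (m + 1))
      (fun i _ => hsets_meas m s i)]
    have : ∀ i ∈ Finset.range (m + 1), P (ξ i ⁻¹' (sets m s i)) = P (ξ 0 ⁻¹' (sets m s i)) :=
      fun i _ => hpre i _ (hsets_meas m s i)
    rw [Finset.prod_congr rfl this, Finset.prod_range_succ]
    have hm : sets m s m = A := by simp [hsets_def]
    have hmid : ∀ i ∈ Finset.range m, P (ξ 0 ⁻¹' (sets m s i))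
        = if i ∈ s then q else r := by
      intro i hi
      have : i ≠ m := by simp at hi; omega
      simp only [hsets_def, if_neg this]
      split_ifs <;> rfl
    rw [Finset.prod_congr rfl hmid, hm, Finset.prod_ite, Finset.prod_const, Finset.prod_const]
    have h1 : Finset.filter (· ∈ s) (Finset.range m) = s := by
      ext i
      simp only [Finset.mem_filter, Finset.mem_range]
      exact ⟨fun h => h.2, fun h => ⟨Finset.mem_range.1 (hs h), h⟩⟩
    have h2 : (Finset.filter (¬ · ∈ s) (Finset.range m)).card = m - k := by
      have := Finset.card_filter_add_card_filter_not
        (s := Finset.range m) (p := (· ∈ s))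
      rw [h1, hcard] at this
      simp at this ⊢
      omega
    rw [h1, hcard, h2]
    ring
  have hd' : ∀ {x : α}, x ∈ A → x ∈ B → False := fun {x} hx hy => by
    have : x ∈ A ∩ B := ⟨hx, hy⟩
    simp [hd] at this
  have hCmeas : ∀ m s, MeasurableSet (C m s) := by
    intro m s
    exact Set.Finite.measurableSet_biInter (Finset.finite_toSet _)
      (fun i _ => (hmeas i) (hsets_meas m s i))
  have hCmem : ∀ m s ω, ω ∈ C m s ↔
      (ξ m ω ∈ A ∧ ∀ i < m, ξ i ω ∈ (if i ∈ s then B else (A ∪ B)ᶜ)) := by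
    intro m s ω
    simp only [hC_def, Set.mem_iInter, Set.mem_preimage, Finset.mem_range, hsets_def]
    constructor
    · intro h
      refine ⟨by simpa using h m (by omega), fun i hi => ?_⟩
      have h2 := h i (by omega)
      rw [if_neg (by omega)] at h2
      exact h2
    · rintro ⟨h1, h2⟩ i hi
      rcases eq_or_lt_of_le (Nat.lt_succ_iff.1 hi) with he | hl
      · simpa [he] using h1
      · rw [if_neg (by omega)]; exact h2 i hl
  have hCprop : ∀ m (s : Finset ℕ), s ∈ (Finset.range m).powersetCard k → ∀ ω, ω ∈ C m s →
      sInf {n | ξ n ω ∈ A} = m ∧ (∀ i, i < m → (ξ i ω ∈ B ↔ i ∈ s)) := by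
    intro m s hsmem ω hω
    rw [Finset.mem_powersetCard] at hsmem
    obtain ⟨hmA, hlt⟩ := (hCmem m s ω).1 hω
    have hnotA : ∀ i < m, ξ i ω ∉ A := by
      intro i hi hiA
      have h2 := hlt i hi
      split_ifs at h2 with h
      · exact hd' hiA h2
      · exact h2 (Or.inl hiA)
    have hsInf : sInf {n | ξ n ω ∈ A} = m := by
      have hne : m ∈ {n | ξ n ω ∈ A} := hmA
      refine le_antisymm (Nat.sInf_le hne) ?_
      by_contra h
      push_neg at h
      exact hnotA _ h (Nat.sInf_mem ⟨m, hne⟩)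
    refine ⟨hsInf, fun i hi => ?_⟩
    have h2 := hlt i hi
    split_ifs at h2 with h
    · exact ⟨fun _ => h, fun _ => h2⟩
    · exact ⟨fun hB => absurd (Or.inr hB) h2, fun hs' => absurd hs' h⟩
  have hsum : ∀ (m : ℕ) ω, (∑ n ∈ Finset.range m, B.indicator (fun _ => (1:ℕ)) (ξ n ω))
      = (Finset.filter (fun n => ξ n ω ∈ B) (Finset.range m)).card := by
    intro m ω
    rw [Finset.card_filter]
    refine Finset.sum_congr rfl fun n _ => ?_
    by_cases h : ξ n ω ∈ B <;> simp [Set.indicator, h]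
  set E : Set Ω := {ω | (∑ n ∈ Finset.range (sInf {n | ξ n ω ∈ A}),
      B.indicator (fun _ => 1) (ξ n ω)) = k} with hE_def
  set Ninf : Set Ω := ⋂ n, ξ n ⁻¹' Aᶜ with hN_def
  have hEdecomp : E ∩ Ninfᶜ = ⋃ m, ⋃ s ∈ (Finset.range m).powersetCard k, C m s := by
    ext ω
    simp only [Set.mem_inter_iff, hE_def, Set.mem_setOf_eq, hN_def, Set.mem_compl_iff,
      Set.mem_iInter, Set.mem_preimage, not_forall, Set.mem_compl_iff, not_not,
      Set.mem_iUnion, exists_prop]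
    constructor
    · rintro ⟨hk, n, hn⟩
      have hn' : ξ n ω ∈ A := by simpa using hn
      have hne : {n | ξ n ω ∈ A}.Nonempty := ⟨n, hn'⟩
      set m := sInf {n | ξ n ω ∈ A} with hm_def
      have hmA : ξ m ω ∈ A := Nat.sInf_mem hne
      have hlt : ∀ i < m, ξ i ω ∉ A := fun i hi => Nat.notMem_of_lt_sInf hi
      refine ⟨m, Finset.filter (fun n => ξ n ω ∈ B) (Finset.range m), ?_, ?_⟩
      · rw [Finset.mem_powersetCard]
        exact ⟨Finset.filter_subset _ _, by rw [← hsum m ω]; exact hk⟩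
      · rw [hCmem]
        refine ⟨hmA, fun i hi => ?_⟩
        by_cases h : ξ i ω ∈ B
        · rw [if_pos (by simp [Finset.mem_filter, Finset.mem_range, hi, h])]
          exact h
        · rw [if_neg (by simp [Finset.mem_filter, h])]
          exact fun hc => hc.elim (hlt i hi) h
    · rintro ⟨m, s, hsmem, hωC⟩
      obtain ⟨hsInf, hiff⟩ := hCprop m s hsmem ω hωC
      have hmA : ξ m ω ∈ A := ((hCmem m s ω).1 hωC).1
      refine ⟨?_, ⟨m, by simpa using hmA⟩⟩
      rw [hsInf, hsum m ω]
      have : Finset.filter (fun n => ξ n ω ∈ B) (Finset.range m) = s := by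
        ext i
        simp only [Finset.mem_filter, Finset.mem_range]
        constructor
        · rintro ⟨hi, hB⟩; exact (hiff i hi).1 hB
        · intro hi
          have him : i < m := Finset.mem_range.1
            ((Finset.mem_powersetCard.1 hsmem).1 hi)
          exact ⟨him, (hiff i him).2 hi⟩
      rw [this]
      exact (Finset.mem_powersetCard.1 hsmem).2
  have hNzero : P Ninf = 0 := by
    have hp0 : 0 < p := by
      rcases (ENNReal.toReal_pos_iff.1 hp) with ⟨h1, _⟩; exact h1
    have hc : P (ξ 0 ⁻¹' Aᶜ) < 1 := by
      rw [Set.preimage_compl, measure_compl ((hmeas 0) hA) (measure_ne_top _ _),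
        measure_univ]
      exact ENNReal.sub_lt_self ENNReal.one_ne_top one_ne_zero hp0.ne'
    have hle : ∀ M, P Ninf ≤ (P (ξ 0 ⁻¹' Aᶜ)) ^ M := by
      intro M
      have hsub : Ninf ⊆ ⋂ i ∈ Finset.range M, ξ i ⁻¹' Aᶜ := by
        intro ω hω
        simp only [Set.mem_iInter]
        exact fun i _ => Set.mem_iInter.1 hω i
      refine (measure_mono hsub).trans ?_
      rw [hindep.measure_inter_preimage_eq_mul (Finset.range M)
        (fun i _ => hA.compl)]
      rw [Finset.prod_congr rfl (fun i _ => hpre i _ hA.compl), Finset.prod_const,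
        Finset.card_range]
    have htend : Tendsto (fun M => (P (ξ 0 ⁻¹' Aᶜ)) ^ M) atTop (nhds 0) :=
      ENNReal.tendsto_pow_atTop_nhds_zero_of_lt_one hc
    exact le_antisymm (ge_of_tendsto' htend hle) zero_le
  have hPE : P E = P (E ∩ Ninfᶜ) := by
    refine le_antisymm ?_ (measure_mono Set.inter_subset_left)
    calc P E ≤ P ((E ∩ Ninfᶜ) ∪ Ninf) := measure_mono (fun ω hω => by
          by_cases h : ω ∈ Ninf
          · exact Or.inr h
          · exact Or.inl ⟨hω, h⟩)
      _ ≤ P (E ∩ Ninfᶜ) + P Ninf := measure_union_le _ _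
      _ = P (E ∩ Ninfᶜ) := by rw [hNzero, add_zero]
  have hDdisj : Pairwise (Function.onFun Disjoint fun m => ⋃ s ∈ (Finset.range m).powersetCard k, C m s) := by
    intro m m' hmm'
    simp only [Function.onFun]
    rw [Set.disjoint_left]
    rintro ω hω hω'
    simp only [Set.mem_iUnion, exists_prop] at hω hω'
    obtain ⟨s, hs, hωs⟩ := hω
    obtain ⟨s', hs', hωs'⟩ := hω'
    exact hmm' ((hCprop m s hs ω hωs).1.symm.trans (hCprop m' s' hs' ω hωs').1)
  have hDmeas : ∀ m, MeasurableSet (⋃ s ∈ (Finset.range m).powersetCard k, C m s) :=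
    fun m => Set.Finite.measurableSet_biUnion (Finset.finite_toSet _)
      (fun s _ => hCmeas m s)
  have hPDm : ∀ m, P (⋃ s ∈ (Finset.range m).powersetCard k, C m s)
      = (m.choose k : ℝ≥0∞) * (p * (q ^ k * r ^ (m - k))) := by
    intro m
    rw [measure_biUnion_finset ?_ (fun s _ => hCmeas m s)]
    · rw [Finset.sum_congr rfl (fun s hs => hCmeasure m s
        (Finset.mem_powersetCard.1 hs).1 (Finset.mem_powersetCard.1 hs).2),
        Finset.sum_const, Finset.card_powersetCard, Finset.card_range, nsmul_eq_mul]
    · intro s hs s' hs' hss'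
      rw [Function.onFun, Set.disjoint_left]
      intro ω hωs hωs'
      apply hss'
      have h1 := (hCprop m s (Finset.mem_coe.1 hs) ω hωs).2
      have h2 := (hCprop m s' (Finset.mem_coe.1 hs') ω hωs').2
      ext i
      constructor
      · intro hi
        have him : i < m := Finset.mem_range.1
          ((Finset.mem_powersetCard.1 (Finset.mem_coe.1 hs)).1 hi)
        exact (h2 i him).1 ((h1 i him).2 hi)
      · intro hi
        have him : i < m := Finset.mem_range.1
          ((Finset.mem_powersetCard.1 (Finset.mem_coe.1 hs')).1 hi)
        exact (h1 i him).1 ((h2 i him).2 hi)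
  have hmain : P E = ∑' m : ℕ, ((m.choose k : ℝ≥0∞) * (p * (q ^ k * r ^ (m - k)))) := by
    rw [hPE, hEdecomp, measure_iUnion hDdisj hDmeas]
    exact tsum_congr hPDm
  -- pass to the reals
  set p' := p.toReal with hp'_def
  set q' := q.toReal with hq'_def
  set r' := r.toReal with hr'_def
  have hsum1 : p' + q' + r' = 1 := by
    have h := congrArg ENNReal.toReal hpqr
    rwa [ENNReal.toReal_add (ENNReal.add_ne_top.2
        ⟨measure_ne_top _ _, measure_ne_top _ _⟩) (measure_ne_top _ _),
      ENNReal.toReal_add (measure_ne_top _ _) (measure_ne_top _ _),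
      ENNReal.toReal_one] at h
  have hq0 : 0 ≤ q' := ENNReal.toReal_nonneg
  have hr0 : 0 ≤ r' := ENNReal.toReal_nonneg
  have hrlt : r' < 1 := by linarith
  have hnorm : ‖r'‖ < 1 := by rw [Real.norm_eq_abs, abs_of_nonneg hr0]; exact hrlt
  have hhs : HasSum (fun m : ℕ => (m.choose k : ℝ) * (p' * (q' ^ k * r' ^ (m - k))))
      (p' * q' ^ k * (1 / (1 - r') ^ (k + 1))) := by
    have h := (hasSum_choose_mul_geometric_of_norm_lt_one k hnorm).mul_left (p' * q' ^ k)
    have hinj : Function.Injective (· + k : ℕ → ℕ) := fun a b hab => by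
      simp only at hab; omega
    refine (hinj.hasSum_iff ?_).1 ?_
    · intro m hm
      have hmk : m < k := by
        by_contra hc
        exact hm ⟨m - k, by simp only []; omega⟩
      simp [Nat.choose_eq_zero_of_lt hmk]
    · refine h.congr_fun fun n => ?_
      simp only [Function.comp_apply, Nat.add_sub_cancel]
      ring
  have hfin : ∀ m : ℕ, ((m.choose k : ℝ≥0∞) * (p * (q ^ k * r ^ (m - k)))) ≠ ⊤ :=
    fun m => ENNReal.mul_ne_top (ENNReal.natCast_ne_top _)
      (ENNReal.mul_ne_top (measure_ne_top _ _)
        (ENNReal.mul_ne_top (ENNReal.pow_ne_top (measure_ne_top _ _))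
          (ENNReal.pow_ne_top (measure_ne_top _ _))))
  have hPEreal : (P E).toReal
      = ∑' m : ℕ, ((m.choose k : ℝ) * (p' * (q' ^ k * r' ^ (m - k)))) := by
    rw [hmain, ENNReal.tsum_toReal_eq hfin]
    congr 1
    funext m
    rw [ENNReal.toReal_mul, ENNReal.toReal_mul, ENNReal.toReal_mul, ENNReal.toReal_pow,
      ENNReal.toReal_pow, ENNReal.toReal_natCast]
  rw [hPEreal, hhs.tsum_eq]
  have h1r : 1 - r' = p' + q' := by linarith
  rw [h1r, mul_one_div]

end Key

/-- The classical i.i.d. case: for i.i.d. `ξ_n` and disjoint sets `Γ_N`, `Δ_N` with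
`N·P(ξ₀ ∈ Γ_N) → λ` and `N·P(ξ₀ ∈ Δ_N) → ν`, the number of visits to `Δ_N` before the
first visit to `Γ_N` converges in distribution to the geometric law with parameter
`λ/(λ+ν)` (convergence in distribution of ℕ-valued variables stated via point masses). -/
theorem iid_geometric_limit
    {Ω α : Type*} [MeasurableSpace Ω] [MeasurableSpace α]
    (P : Measure Ω) [IsProbabilityMeasure P]
    (ξ : ℕ → Ω → α) (hmeas : ∀ n, Measurable (ξ n))
    (hindep : iIndepFun ξ P)
    (hident : ∀ n, P.map (ξ n) = P.map (ξ 0))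
    (Γ Δ : ℕ → Set α)
    (hΓmeas : ∀ N, MeasurableSet (Γ N)) (hΔmeas : ∀ N, MeasurableSet (Δ N))
    (hdisj : ∀ N, Γ N ∩ Δ N = ∅)
    (lam ν : ℝ) (hlam : 0 < lam) (hν : 0 < ν)
    (hΓlim : Tendsto (fun N : ℕ => (N : ℝ) * (P {ω | ξ 0 ω ∈ Γ N}).toReal / lam)
      atTop (nhds 1))
    (hΔlim : Tendsto (fun N : ℕ => (N : ℝ) * (P {ω | ξ 0 ω ∈ Δ N}).toReal / ν)
      atTop (nhds 1)) :
    ∀ k : ℕ,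
      Tendsto (fun N : ℕ =>
          (P {ω | (∑ n ∈ Finset.range (sInf {n | ξ n ω ∈ Γ N}),
            (Δ N).indicator (fun _ => 1) (ξ n ω)) = k}).toReal)
        atTop (nhds ((lam / (lam + ν)) * (1 - lam / (lam + ν)) ^ k)) := by
  intro k
  set pf : ℕ → ℝ := fun N => (P {ω | ξ 0 ω ∈ Γ N}).toReal with hpf
  set qf : ℕ → ℝ := fun N => (P {ω | ξ 0 ω ∈ Δ N}).toReal with hqf
  have hptend : Tendsto (fun N : ℕ => (N : ℝ) * pf N) atTop (nhds lam) := by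
    have h := hΓlim.mul_const lam
    rw [one_mul] at h
    refine h.congr fun N => ?_
    field_simp; rfl
  have hqtend : Tendsto (fun N : ℕ => (N : ℝ) * qf N) atTop (nhds ν) := by
    have h := hΔlim.mul_const ν
    rw [one_mul] at h
    refine h.congr fun N => ?_
    field_simp; rfl
  have hlim : Tendsto (fun N : ℕ => ((N:ℝ) * pf N) * ((N:ℝ) * qf N) ^ k /
      ((N:ℝ) * pf N + (N:ℝ) * qf N) ^ (k + 1)) atTop
      (nhds (lam * ν ^ k / (lam + ν) ^ (k + 1))) :=
    (hptend.mul (hqtend.pow k)).div ((hptend.add hqtend).pow _) (by positivity)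
  have htarget : (lam / (lam + ν)) * (1 - lam / (lam + ν)) ^ k
      = lam * ν ^ k / (lam + ν) ^ (k + 1) := by
    have h0 : lam + ν ≠ 0 := by positivity
    have h1 : 1 - lam / (lam + ν) = ν / (lam + ν) := by field_simp; ring
    rw [h1]
    rw [div_pow, div_mul_div_comm, ← pow_succ']
  rw [htarget]
  have hev : ∀ᶠ N : ℕ in atTop, 0 < pf N := by
    have h2 : ∀ᶠ N : ℕ in atTop, lam / 2 < (N : ℝ) * pf N :=
      hptend.eventually_const_lt (by linarith)
    filter_upwards [h2] with N hN2
    by_contra h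
    push_neg at h
    nlinarith [Nat.cast_nonneg (α := ℝ) N]
  refine Tendsto.congr' ?_ hlim
  filter_upwards [hev, eventually_ge_atTop 1] with N hN hN1
  have hkey := key P ξ hmeas hindep hident (Γ N) (Δ N) (hΓmeas N) (hΔmeas N)
    (hdisj N) hN k
  have hpf' : (P (ξ 0 ⁻¹' Γ N)).toReal = pf N := rfl
  have hqf' : (P (ξ 0 ⁻¹' Δ N)).toReal = qf N := rfl
  rw [hkey, hpf', hqf']
  have hNpos : (0:ℝ) < (N:ℝ) := by exact_mod_cast hN1
  have hq0 : 0 ≤ qf N := ENNReal.toReal_nonneg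
  have hb1 : (0:ℝ) < (N:ℝ) * pf N + (N:ℝ) * qf N := by nlinarith
  have hb2 : (0:ℝ) < pf N + qf N := by linarith
  have hfac : (N:ℝ) * pf N + (N:ℝ) * qf N = (N:ℝ) * (pf N + qf N) := by ring
  have hnum : (N:ℝ) * pf N * ((N:ℝ) * qf N) ^ k
      = (N:ℝ) ^ (k + 1) * (pf N * qf N ^ k) := by
    rw [mul_pow]; ring
  have hden : ((N:ℝ) * (pf N + qf N)) ^ (k + 1)
      = (N:ℝ) ^ (k + 1) * (pf N + qf N) ^ (k + 1) := mul_pow _ _ _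
  rw [hfac, hnum, hden, mul_div_mul_left _ _ (by positivity : ((N:ℝ)) ^ (k+1) ≠ 0)]
end
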